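/- Let ξ₀(s) = ∫₀¹ ((1−x)/(1+x))·s·x^{s−1} dx for s > 0. Then ξ₀ maps (0,∞) onto (0,1): ξ₀ is strictly decreasing, lim_{s→0⁺} ξ₀(s) = 1, and lim_{s→∞} ξ₀(s) = 0. -/

import Mathlib

open MeasureTheory Real Set Filter
open Topology

noncomputable def ξ₀ (s : ℝ) : ℝ :=
  ∫ x in (0:ℝ)..1, ((1 - x) / (1 + x)) * (s * x ^ (s - 1))

noncomputable def P (t u : ℝ) : ℝ := (1 - u ^ t) / (1 + u ^ t)

lemma rpow_cont {t : ℝ} (ht : 0 < t) : Continuous fun u : ℝ => u ^ t :=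
  continuous_iff_continuousAt.2 fun x => Real.continuousAt_rpow_const x t (Or.inr ht.le)

lemma Pcont {t : ℝ} (ht : 0 < t) : ContinuousOn (P t) (Icc 0 1) := by
  apply ContinuousOn.div
  · exact (continuous_const.sub (rpow_cont ht)).continuousOn
  · exact (continuous_const.add (rpow_cont ht)).continuousOn
  · intro u hu
    have : (0:ℝ) ≤ u ^ t := Real.rpow_nonneg hu.1 t
    positivity

lemma frac_anti {a b : ℝ} (ha : 0 ≤ a) (hab : a ≤ b) :
    (1 - b) / (1 + b) ≤ (1 - a) / (1 + a) := by
  rw [div_le_div_iff₀ (by linarith) (by linarith)]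
  nlinarith

lemma frac_strict_anti {a b : ℝ} (ha : 0 ≤ a) (hab : a < b) :
    (1 - b) / (1 + b) < (1 - a) / (1 + a) := by
  rw [div_lt_div_iff₀ (by linarith) (by linarith)]
  nlinarith

lemma xi_eq {s : ℝ} (hs : 0 < s) : ξ₀ s = ∫ u in (0:ℝ)..1, P (1/s) u := by
  have himg : (fun x : ℝ => x ^ s) '' Ioo 0 1 = Ioo 0 1 := by
    ext y
    constructor
    · rintro ⟨x, hx, rfl⟩
      exact ⟨Real.rpow_pos_of_pos hx.1 s, Real.rpow_lt_one hx.1.le hx.2 hs⟩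
    · intro hy
      refine ⟨y ^ (1/s), ⟨Real.rpow_pos_of_pos hy.1 _, Real.rpow_lt_one hy.1.le hy.2 (by positivity)⟩, ?_⟩
      show (y ^ (1/s)) ^ s = y
      rw [← Real.rpow_mul hy.1.le, one_div_mul_cancel hs.ne', Real.rpow_one]
  have hderiv : ∀ x ∈ Ioo (0:ℝ) 1, HasDerivWithinAt (fun x : ℝ => x ^ s)
      (s * x ^ (s - 1)) (Ioo 0 1) x := fun x hx =>
    (Real.hasDerivAt_rpow_const (Or.inl hx.1.ne')).hasDerivWithinAt
  have hinj : InjOn (fun x : ℝ => x ^ s) (Ioo 0 1) := by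
    intro x hx y hy h
    rcases lt_trichotomy x y with h' | h' | h'
    · exact absurd h (Real.rpow_lt_rpow hx.1.le h' hs).ne
    · exact h'
    · exact absurd h.symm (Real.rpow_lt_rpow hy.1.le h' hs).ne
  have key := integral_image_eq_integral_abs_deriv_smul measurableSet_Ioo hderiv hinj (P (1/s))
  rw [himg] at key
  have h1 : ξ₀ s = ∫ x in Ioo (0:ℝ) 1, ((1 - x) / (1 + x)) * (s * x ^ (s - 1)) := by
    rw [ξ₀, intervalIntegral.integral_of_le zero_le_one, integral_Ioc_eq_integral_Ioo]
  have h2 : (∫ u in (0:ℝ)..1, P (1/s) u) = ∫ u in Ioo (0:ℝ) 1, P (1/s) u := by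
    rw [intervalIntegral.integral_of_le zero_le_one, integral_Ioc_eq_integral_Ioo]
  rw [h1, h2, key]
  apply setIntegral_congr_fun measurableSet_Ioo
  intro x hx
  have hx0 : (0:ℝ) < x := hx.1
  have hxs : (x ^ s) ^ (1/s) = x := by
    rw [← Real.rpow_mul hx0.le, mul_one_div_cancel hs.ne', Real.rpow_one]
  have habs : |s * x ^ (s - 1)| = s * x ^ (s - 1) := by
    rw [abs_of_nonneg]
    positivity
  simp only [smul_eq_mul, habs, P, hxs]
  ring

lemma Pnonneg {t u : ℝ} (ht : 0 < t) (hu : u ∈ Icc (0:ℝ) 1) : 0 ≤ P t u := by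
  have h1 : u ^ t ≤ 1 := Real.rpow_le_one hu.1 hu.2 ht.le
  have h0 : 0 ≤ u ^ t := Real.rpow_nonneg hu.1 t
  exact div_nonneg (by linarith) (by linarith)

lemma Ple_one {t u : ℝ} (ht : 0 < t) (hu : u ∈ Icc (0:ℝ) 1) : P t u ≤ 1 := by
  have h0 : 0 ≤ u ^ t := Real.rpow_nonneg hu.1 t
  rw [P, div_le_one (by linarith)]
  linarith

lemma xi_strictAnti : StrictAntiOn ξ₀ (Set.Ioi 0) := by
  intro s₁ hs₁ s₂ hs₂ h
  rw [mem_Ioi] at hs₁ hs₂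
  have ht₁ : (0:ℝ) < 1/s₁ := by positivity
  have ht₂ : (0:ℝ) < 1/s₂ := by positivity
  have htle : 1/s₂ < 1/s₁ := by
    apply one_div_lt_one_div_of_lt hs₁ h
  rw [xi_eq hs₁, xi_eq hs₂]
  apply intervalIntegral.integral_lt_integral_of_continuousOn_of_le_of_exists_lt zero_lt_one
    (Pcont ht₂) (Pcont ht₁)
  · intro u hu
    have h1 : u ^ (1/s₁) ≤ u ^ (1/s₂) :=
      Real.rpow_le_rpow_of_exponent_ge hu.1 hu.2 htle.le
    exact frac_anti (Real.rpow_nonneg (le_of_lt hu.1) _) h1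
  · refine ⟨1/2, ⟨by norm_num, by norm_num⟩, ?_⟩
    have h1 : (1/2:ℝ) ^ (1/s₁) < (1/2:ℝ) ^ (1/s₂) :=
      Real.rpow_lt_rpow_of_exponent_gt (by norm_num) (by norm_num) htle
    exact frac_strict_anti (Real.rpow_nonneg (by norm_num) _) h1

lemma xi_mem_Ioo {s : ℝ} (hs : 0 < s) : ξ₀ s ∈ Ioo (0:ℝ) 1 := by
  have ht : (0:ℝ) < 1/s := by positivity
  rw [xi_eq hs]
  constructor
  · have key : (∫ u in (0:ℝ)..1, (0:ℝ)) < ∫ u in (0:ℝ)..1, P (1/s) u := by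
      apply intervalIntegral.integral_lt_integral_of_continuousOn_of_le_of_exists_lt zero_lt_one
        continuousOn_const (Pcont ht)
      · intro u hu
        exact Pnonneg ht ⟨hu.1.le, hu.2⟩
      · refine ⟨1/2, ⟨by norm_num, by norm_num⟩, ?_⟩
        have h1 : (1/2:ℝ) ^ (1/s) < 1 := Real.rpow_lt_one (by norm_num) (by norm_num) ht
        have h0' : (0:ℝ) < (1/2:ℝ) ^ (1/s) := Real.rpow_pos_of_pos (by norm_num) _
        rw [P]
        exact div_pos (by linarith) (by linarith)
    simpa using key
  · have key : (∫ u in (0:ℝ)..1, P (1/s) u) < ∫ u in (0:ℝ)..1, (1:ℝ) := by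
      apply intervalIntegral.integral_lt_integral_of_continuousOn_of_le_of_exists_lt zero_lt_one
        (Pcont ht) continuousOn_const
      · intro u hu
        exact Ple_one ht ⟨hu.1.le, hu.2⟩
      · refine ⟨1/2, ⟨by norm_num, by norm_num⟩, ?_⟩
        have h0' : (0:ℝ) < (1/2:ℝ) ^ (1/s) := Real.rpow_pos_of_pos (by norm_num) _
        rw [P, div_lt_one (by linarith)]
        linarith
    simpa using key

lemma Pmeas {t : ℝ} (ht : 0 < t) :
    AEStronglyMeasurable (P t) (volume.restrict (Set.uIoc (0:ℝ) 1)) := by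
  rw [uIoc_of_le (zero_le_one)]
  exact ((Pcont ht).mono Ioc_subset_Icc_self).aestronglyMeasurable measurableSet_Ioc

lemma Pbound {t : ℝ} (ht : 0 < t) :
    ∀ᵐ u : ℝ, u ∈ Set.uIoc (0:ℝ) 1 → ‖P t u‖ ≤ 1 := by
  filter_upwards [] with u hu
  rw [uIoc_of_le (zero_le_one)] at hu
  have hu' : u ∈ Icc (0:ℝ) 1 := ⟨hu.1.le, hu.2⟩
  rw [Real.norm_eq_abs, abs_of_nonneg (Pnonneg ht hu')]
  exact Ple_one ht hu'

lemma frac_tendsto {a : ℝ} {l : Filter ℝ} {f : ℝ → ℝ} (hf : Tendsto f l (𝓝 a))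
    (ha : 1 + a ≠ 0) : Tendsto (fun x => (1 - f x) / (1 + f x)) l (𝓝 ((1 - a) / (1 + a))) :=
  (tendsto_const_nhds.sub hf).div (tendsto_const_nhds.add hf) ha

lemma xi_tendsto_one : Tendsto ξ₀ (nhdsWithin 0 (Set.Ioi 0)) (nhds 1) := by
  have key : Tendsto (fun s => ∫ u in (0:ℝ)..1, P (1/s) u) (𝓝[>] (0:ℝ))
      (𝓝 (∫ u in (0:ℝ)..1, (1:ℝ))) := by
    apply intervalIntegral.tendsto_integral_filter_of_dominated_convergence (fun _ => (1:ℝ))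
    · filter_upwards [self_mem_nhdsWithin] with s hs
      exact Pmeas (by simp only [mem_Ioi] at hs; positivity)
    · filter_upwards [self_mem_nhdsWithin] with s hs
      exact Pbound (by simp only [mem_Ioi] at hs; positivity)
    · exact intervalIntegrable_const
    · have hne : ∀ᵐ u : ℝ, u ≠ (1:ℝ) := by
        rw [ae_iff]
        simp [Real.volume_singleton]
      filter_upwards [hne] with u hu1 hu
      rw [uIoc_of_le (zero_le_one)] at hu
      have hu0 : 0 < u := hu.1
      have hu1' : u < 1 := lt_of_le_of_ne hu.2 hu1
      have l1 : Tendsto (fun s : ℝ => 1/s) (𝓝[>] (0:ℝ)) atTop := by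
        simpa [one_div] using tendsto_inv_nhdsGT_zero (𝕜 := ℝ)
      have l2 : Tendsto (fun s : ℝ => u ^ (1/s)) (𝓝[>] (0:ℝ)) (𝓝 0) :=
        (tendsto_rpow_atTop_of_base_lt_one u (by linarith) hu1').comp l1
      have := frac_tendsto l2 (by norm_num)
      simpa [P] using this
  have : Tendsto (fun s => ∫ u in (0:ℝ)..1, P (1/s) u) (𝓝[>] (0:ℝ)) (𝓝 1) := by
    simpa using key
  apply this.congr'
  filter_upwards [self_mem_nhdsWithin] with s hs
  exact (xi_eq hs).symm

lemma xi_tendsto_zero : Tendsto ξ₀ atTop (nhds 0) := by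
  have key : Tendsto (fun s => ∫ u in (0:ℝ)..1, P (1/s) u) atTop
      (𝓝 (∫ u in (0:ℝ)..1, (0:ℝ))) := by
    apply intervalIntegral.tendsto_integral_filter_of_dominated_convergence (fun _ => (1:ℝ))
    · filter_upwards [eventually_gt_atTop 0] with s hs
      exact Pmeas (by positivity)
    · filter_upwards [eventually_gt_atTop 0] with s hs
      exact Pbound (by positivity)
    · exact intervalIntegrable_const
    · filter_upwards [] with u hu
      rw [uIoc_of_le (zero_le_one)] at hu
      have hu0 : 0 < u := hu.1
      have l1 : Tendsto (fun s : ℝ => 1/s) atTop (𝓝 0) := by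
        simpa [one_div] using tendsto_inv_atTop_zero (𝕜 := ℝ)
      have l2 : Tendsto (fun s : ℝ => u ^ (1/s)) atTop (𝓝 1) := by
        have := (Real.continuousAt_const_rpow (a := u) (b := 0) hu0.ne').tendsto.comp l1
        simpa [Real.rpow_zero, Function.comp_def] using this
      have := frac_tendsto l2 (by norm_num)
      simpa [P] using this
  have h2 : Tendsto (fun s => ∫ u in (0:ℝ)..1, P (1/s) u) atTop (𝓝 0) := by
    simpa using key
  apply h2.congr'
  filter_upwards [eventually_gt_atTop 0] with s hs
  exact (xi_eq hs).symm

lemma xi_contOn : ContinuousOn ξ₀ (Ioi 0) := by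
  intro s₀ hs₀
  rw [mem_Ioi] at hs₀
  apply ContinuousAt.continuousWithinAt
  have hmem : Ioi (0:ℝ) ∈ 𝓝 s₀ := Ioi_mem_nhds hs₀
  have key : ContinuousAt (fun s => ∫ u in (0:ℝ)..1, P (1/s) u) s₀ := by
    apply intervalIntegral.continuousAt_of_dominated_interval (bound := fun _ => (1:ℝ))
    · filter_upwards [hmem] with s hs
      exact Pmeas (by simp only [mem_Ioi] at hs; positivity)
    · filter_upwards [hmem] with s hs
      exact Pbound (by simp only [mem_Ioi] at hs; positivity)
    · exact intervalIntegrable_const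
    · filter_upwards [] with u hu
      rw [uIoc_of_le (zero_le_one)] at hu
      have hu0 : 0 < u := hu.1
      have l1 : ContinuousAt (fun s : ℝ => u ^ (1/s)) s₀ := by
        apply (Real.continuousAt_const_rpow (a := u) hu0.ne').comp
        exact (continuousAt_const.div continuousAt_id hs₀.ne')
      have hden : 1 + u ^ (1/s₀) ≠ 0 := by
        have : 0 ≤ u ^ (1/s₀) := Real.rpow_nonneg hu0.le _
        positivity
      exact ((continuousAt_const.sub l1).div (continuousAt_const.add l1) hden)
  apply key.congr
  filter_upwards [hmem] with s hs
  exact (xi_eq hs).symm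

lemma xi_image : ξ₀ '' Set.Ioi 0 = Set.Ioo 0 1 := by
  apply Subset.antisymm
  · rintro _ ⟨s, hs, rfl⟩
    exact xi_mem_Ioo hs
  · rintro y hy
    have h1 : ∀ᶠ s in 𝓝[>] (0:ℝ), y < ξ₀ s :=
      xi_tendsto_one.eventually (eventually_gt_nhds hy.2)
    obtain ⟨a, hay, ha⟩ : ∃ a, y < ξ₀ a ∧ a ∈ Ioi (0:ℝ) :=
      (h1.and self_mem_nhdsWithin).exists
    have h2 : ∀ᶠ s in atTop, ξ₀ s < y :=
      xi_tendsto_zero.eventually (eventually_lt_nhds hy.1)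
    obtain ⟨b, hb1, hb2⟩ : ∃ b, ξ₀ b < y ∧ a ≤ b :=
      (h2.and (eventually_ge_atTop a)).exists
    have hab : Icc a b ⊆ Ioi (0:ℝ) := fun x hx => lt_of_lt_of_le ha hx.1
    have := intermediate_value_Icc' hb2 (xi_contOn.mono hab)
    have hy' : y ∈ Icc (ξ₀ b) (ξ₀ a) := ⟨hb1.le, hay.le⟩
    obtain ⟨x, hx, hxy⟩ := this hy'
    exact ⟨x, hab hx, hxy⟩

theorem xi0_maps_onto_Ioo :
    StrictAntiOn ξ₀ (Set.Ioi 0) ∧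
    Tendsto ξ₀ (nhdsWithin 0 (Set.Ioi 0)) (nhds 1) ∧
    Tendsto ξ₀ atTop (nhds 0) ∧
    ξ₀ '' Set.Ioi 0 = Set.Ioo 0 1 :=
  ⟨xi_strictAnti, xi_tendsto_one, xi_tendsto_zero, xi_image⟩
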